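/- Let (X,d,m) be a locally compact metric measure space such that (X,d) is a length space. Assume that for all μ_0, μ_1 ∈ P_2(X) with μ_0 absolutely continuous with respect to m, every optimal plan between μ_0 and μ_1 is induced by a map. Then every bijective isometry f of X with f ≠ id satisfies m(Fix(f)) = 0; in particular, condition (a) holds for G = ISO(X) and for G = ISO_m(X). -/

import Mathlib

open Metric MeasureTheory ENNReal Set

noncomputable section

/-- Compact-open topology on the isometry group. -/
instance isoCompactOpen (X : Type*) [MetricSpace X] : TopologicalSpace (X ≃ᵢ X) :=
  TopologicalSpace.induced
    (fun f : X ≃ᵢ X => (⟨f, f.continuous⟩ : C(X, X))) ContinuousMap.compactOpen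

/-- The subgroup of measure-preserving isometries. -/
def isoMeasure {X : Type*} [MetricSpace X] [MeasurableSpace X] [BorelSpace X]
    (m : Measure X) : Subgroup (X ≃ᵢ X) where
  carrier := {f | Measure.map f m = m}
  one_mem' := by
    show Measure.map ⇑(1 : X ≃ᵢ X) m = m
    rw [IsometryEquiv.coe_one, Measure.map_id]
  mul_mem' := by
    intro f g hf hg
    show Measure.map ⇑(f * g) m = m
    rw [IsometryEquiv.coe_mul,
      ← Measure.map_map f.continuous.measurable g.continuous.measurable]
    rw [show Measure.map (⇑g) m = m from hg, show Measure.map (⇑f) m = m from hf]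
  inv_mem' := by
    intro f hf
    show Measure.map ⇑f⁻¹ m = m
    conv_lhs => rw [← show Measure.map (⇑f) m = m from hf]
    rw [Measure.map_map f⁻¹.continuous.measurable f.continuous.measurable]
    have h : ⇑f⁻¹ ∘ ⇑f = id := by
      funext y; exact f.symm_apply_apply y
    rw [h, Measure.map_id]

/-- The ball condition: every closed ball is the closure of the open ball. -/
def BallCondition (X : Type*) [MetricSpace X] : Prop :=
  ∀ (x : X) (r : ℝ), 0 < r → closedBall x r = closure (ball x r)

/-- `GHDistLt A B c` : the Gromov–Hausdorff distance between `A` and `B` is `< c`,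
expressed through isometric embeddings into `ℓ^∞(ℕ)`. -/
def GHDistLt {X : Type*} [MetricSpace X] {Y : Type*} [MetricSpace Y]
    (A : Set X) (B : Set Y) (c : ℝ) : Prop :=
  ∃ (f : A → lp (fun _ : ℕ => ℝ) ∞) (g : B → lp (fun _ : ℕ => ℝ) ∞),
    Isometry f ∧ Isometry g ∧
      EMetric.hausdorffEdist (Set.range f) (Set.range g) < ENNReal.ofReal c

/-- `X` has `m`-a.e. Euclidean tangent cones (quantitative form). -/
def HasAEEuclideanTangents {X : Type*} [MetricSpace X] [MeasurableSpace X]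
    (m : Measure X) : Prop :=
  ∃ K : ℕ, ∀ ε : ℝ, 0 < ε →
    m ({x : X | ∃ δ > 0, ∃ k ≤ K, ∀ r : ℝ, 0 < r → r < δ →
        GHDistLt (closedBall x r) (closedBall (0 : EuclideanSpace ℝ (Fin k)) r) (ε * r)}ᶜ) = 0

/-- Condition (a) for a group `G` of isometries. -/
def CondA {X : Type*} [MetricSpace X] [MeasurableSpace X] (m : Measure X)
    (G : Subgroup (X ≃ᵢ X)) : Prop :=
  ∃ (x : X) (s : ℝ) (FIX : ℝ≥0∞), 0 < s ∧ 0 < FIX ∧ FIX < m (ball x s) ∧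
    ∀ g ∈ G, g ≠ 1 → m ({y | g y = y} ∩ ball x s) < FIX

/-- `G` is a Lie group: it admits a `C^∞`-manifold structure modeled on some `ℝⁿ`,
compatible with its topology, making multiplication and inversion smooth. -/
def IsLieGroup (G : Type*) [Group G] [TopologicalSpace G] : Prop :=
  ∃ (n : ℕ) (cs : ChartedSpace (EuclideanSpace ℝ (Fin n)) G),
    @LieGroup ℝ _ (EuclideanSpace ℝ (Fin n)) _ (EuclideanSpace ℝ (Fin n)) _ _
      (modelWithCornersSelf ℝ (EuclideanSpace ℝ (Fin n))) (⊤ : ℕ∞) G _ _ cs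

end

/-- `(X, d)` is a length space: the distance is the infimum of lengths
(total variations) of continuous paths joining the two points. -/
def IsLengthSpace (X : Type*) [MetricSpace X] : Prop :=
  ∀ x y : X, edist x y =
    ⨅ (γ : ℝ → X) (_ : ContinuousOn γ (Set.Icc 0 1)) (_ : γ 0 = x) (_ : γ 1 = y),
      eVariationOn γ (Set.Icc 0 1)

/-- A Borel probability measure has finite second moment. -/
def FiniteSecondMoment {X : Type*} [MetricSpace X] [MeasurableSpace X]
    (μ : Measure X) : Prop :=
  ∃ x₀ : X, ∫⁻ x, edist x x₀ ^ 2 ∂μ ≠ ∞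

/-- `pl` is a coupling of `μ₀` and `μ₁`. -/
def IsCoupling {X : Type*} [MetricSpace X] [MeasurableSpace X]
    (pl : Measure (X × X)) (μ₀ μ₁ : Measure X) : Prop :=
  pl.map Prod.fst = μ₀ ∧ pl.map Prod.snd = μ₁

/-- `pl` is an optimal plan between `μ₀` and `μ₁` for the quadratic cost. -/
def IsOptimalPlan {X : Type*} [MetricSpace X] [MeasurableSpace X]
    (pl : Measure (X × X)) (μ₀ μ₁ : Measure X) : Prop :=
  IsProbabilityMeasure pl ∧ IsCoupling pl μ₀ μ₁ ∧
    ∀ pl' : Measure (X × X), IsProbabilityMeasure pl' → IsCoupling pl' μ₀ μ₁ →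
      ∫⁻ p, edist p.1 p.2 ^ 2 ∂pl ≤ ∫⁻ p, edist p.1 p.2 ^ 2 ∂pl'

/-- In a locally compact length metric measure space in which every
optimal plan issued from an absolutely continuous measure is induced by a map, every
nontrivial isometry has fixed point set of measure zero; in particular condition (a)
holds both for `ISO(X)` and for `ISO_m(X)`. -/
theorem fixed_points_null_of_plans_induced_by_maps
    {X : Type*} [MetricSpace X] [TopologicalSpace.SeparableSpace X] [CompleteSpace X]
    [LocallyCompactSpace X] [MeasurableSpace X] [BorelSpace X]
    (m : Measure X) (hm0 : m ≠ 0)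
    (hfin : ∀ s : Set X, Bornology.IsBounded s → m s ≠ ∞)
    (hsupp : ∀ U : Set X, IsOpen U → U.Nonempty → 0 < m U)
    (hlength : IsLengthSpace X)
    (H : ∀ μ₀ μ₁ : Measure X, IsProbabilityMeasure μ₀ → IsProbabilityMeasure μ₁ →
      FiniteSecondMoment μ₀ → FiniteSecondMoment μ₁ → μ₀ ≪ m →
      ∀ pl : Measure (X × X), IsOptimalPlan pl μ₀ μ₁ →
        ∃ T : X → X, Measurable T ∧ pl = μ₀.map (fun x => (x, T x))) :
    (∀ f : X ≃ᵢ X, f ≠ 1 → m {x : X | f x = x} = 0) ∧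
      CondA m (⊤ : Subgroup (X ≃ᵢ X)) ∧ CondA m (isoMeasure m) := by
    -- First, the key claim: every nontrivial isometry has null fixed-point set.
  have hX : Nonempty X := by
    by_contra hemp
    rw [not_nonempty_iff] at hemp
    exact hm0 (by ext s hs; simp [Set.eq_empty_of_isEmpty s])
  obtain ⟨x₀⟩ := hX
  have key : ∀ f : X ≃ᵢ X, f ≠ 1 → m {x : X | f x = x} = 0 := by
    intro f hf
    by_contra hF
    -- a point moved by f
    obtain ⟨x, hx⟩ : ∃ x : X, f x ≠ x := by
      by_contra h
      push_neg at h
      exact hf (IsometryEquiv.ext h)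
    set F : Set X := {x : X | f x = x} with hFdef
    have hFclosed : IsClosed F := isClosed_eq f.continuous continuous_id
    have hFmeas : MeasurableSet F := hFclosed.measurableSet
    -- find a bounded piece of F of positive measure
    obtain ⟨n, hn⟩ : ∃ n : ℕ, m (F ∩ closedBall x₀ n) ≠ 0 := by
      by_contra h
      push_neg at h
      apply hF
      have hcover : F ⊆ ⋃ n : ℕ, F ∩ closedBall x₀ n := by
        intro y hy
        obtain ⟨n, hn⟩ := exists_nat_ge (dist y x₀)
        exact Set.mem_iUnion.2 ⟨n, hy, mem_closedBall.2 hn⟩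
      exact measure_mono_null hcover (measure_iUnion_null h)
    set E : Set X := F ∩ closedBall x₀ n with hEdef
    have hEmeas : MeasurableSet E := hFmeas.inter measurableSet_closedBall
    have hEne : m E ≠ 0 := hn
    have hEfin : m E ≠ ∞ :=
      hfin _ (Bornology.IsBounded.subset isBounded_closedBall Set.inter_subset_right)
    -- the two measures
    set μ0 : Measure X := (m E)⁻¹ • m.restrict E with hμ0def
    set μ1 : Measure X := (1/2 : ℝ≥0∞) • Measure.dirac x
        + (1/2 : ℝ≥0∞) • Measure.dirac (f x) with hμ1def
    have hμ0univ : μ0 Set.univ = 1 := by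
      rw [hμ0def]
      simp only [Measure.smul_apply, smul_eq_mul, Measure.restrict_apply_univ]
      exact ENNReal.inv_mul_cancel hEne hEfin
    haveI hμ0prob : IsProbabilityMeasure μ0 := ⟨hμ0univ⟩
    haveI hμ1prob : IsProbabilityMeasure μ1 := by
      constructor
      rw [hμ1def]
      simp [ENNReal.inv_two_add_inv_two]
    -- μ0 is concentrated on E
    have hμ0E : μ0 Eᶜ = 0 := by
      rw [hμ0def]
      simp [Measure.restrict_apply hEmeas.compl]
    -- μ1 is concentrated on {x, f x}
    have hmx : MeasurableSet ({x, f x} : Set X) :=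
      (measurableSet_singleton (f x)).insert x
    have hμ1supp : μ1 ({x, f x} : Set X)ᶜ = 0 := by
      rw [hμ1def]
      simp [Measure.dirac_apply' _ hmx.compl, Set.indicator_apply]
    -- key geometric fact: points of E are equidistant from x and f x
    have hEq : ∀ e ∈ E, ∀ y ∈ ({x, f x} : Set X), edist e y = edist e x := by
      rintro e ⟨he, -⟩ y hy
      rcases hy with rfl | hy
      · rfl
      · rcases hy with rfl
        calc edist e (f x) = edist (f e) (f x) := by
              rw [show f e = e from he]
          _ = edist e x := f.isometry.edist_eq e x
    -- every coupling has the same cost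
    have hme : Measurable fun e : X => edist e x :=
      (continuous_id.edist continuous_const).measurable
    have hcost : ∀ pl' : Measure (X × X), IsProbabilityMeasure pl' →
        IsCoupling pl' μ0 μ1 →
        ∫⁻ p, edist p.1 p.2 ^ 2 ∂pl' = ∫⁻ e, edist e x ^ 2 ∂μ0 := by
      intro pl' _ ⟨hfst, hsnd⟩
      have h1 : pl' {p : X × X | p.1 ∉ E} = 0 := by
        have : pl' {p : X × X | p.1 ∉ E} = (pl'.map Prod.fst) Eᶜ := by
          rw [Measure.map_apply measurable_fst hEmeas.compl]; rfl
        rw [this, hfst]; exact hμ0E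
      have h2 : pl' {p : X × X | p.2 ∉ ({x, f x} : Set X)} = 0 := by
        have hmeas2 : MeasurableSet (({x, f x} : Set X)ᶜ) :=
          ((measurableSet_singleton x).union (measurableSet_singleton (f x))).compl
        have : pl' {p : X × X | p.2 ∉ ({x, f x} : Set X)}
            = (pl'.map Prod.snd) ({x, f x} : Set X)ᶜ := by
          rw [Measure.map_apply measurable_snd hmeas2]; rfl
        rw [this, hsnd]; exact hμ1supp
      have hae : ∀ᵐ p ∂pl', edist p.1 p.2 ^ 2 = edist p.1 x ^ 2 := by
        have g1 : ∀ᵐ p ∂pl', p.1 ∈ E := by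
          rw [MeasureTheory.ae_iff]; exact h1
        have g2 : ∀ᵐ p ∂pl', p.2 ∈ ({x, f x} : Set X) := by
          rw [MeasureTheory.ae_iff]; exact h2
        filter_upwards [g1, g2] with p hp1 hp2
        rw [hEq p.1 hp1 p.2 hp2]
      calc ∫⁻ p, edist p.1 p.2 ^ 2 ∂pl' = ∫⁻ p, edist p.1 x ^ 2 ∂pl' :=
            lintegral_congr_ae hae
        _ = ∫⁻ e, edist e x ^ 2 ∂(pl'.map Prod.fst) :=
            (lintegral_map (hme.pow_const 2) measurable_fst).symm
        _ = ∫⁻ e, edist e x ^ 2 ∂μ0 := by rw [hfst]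
    -- the product plan
    set pl : Measure (X × X) := μ0.prod μ1 with hpldef
    haveI : IsProbabilityMeasure pl := by
      rw [hpldef]; infer_instance
    have hplcoup : IsCoupling pl μ0 μ1 := by
      constructor
      · rw [hpldef, Measure.map_fst_prod, measure_univ, one_smul]
      · rw [hpldef, Measure.map_snd_prod, measure_univ, one_smul]
    have hplopt : IsOptimalPlan pl μ0 μ1 := by
      refine ⟨inferInstance, hplcoup, fun pl' hp' hc' => ?_⟩
      rw [hcost pl inferInstance hplcoup, hcost pl' hp' hc']
    -- finite second moments
    have hμ0mom : FiniteSecondMoment μ0 := by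
      refine ⟨x₀, ?_⟩
      rw [hμ0def]
      simp only [Measure.smul_apply, lintegral_smul_measure, smul_eq_mul]
      intro habs
      have hb : ∫⁻ e in E, edist e x₀ ^ 2 ∂m ≤ (ENNReal.ofReal n) ^ 2 * m E := by
        calc ∫⁻ e in E, edist e x₀ ^ 2 ∂m
            ≤ ∫⁻ _ in E, (ENNReal.ofReal n) ^ 2 ∂m := by
              refine setLIntegral_mono ?_ ?_
              · exact measurable_const
              · intro e he
                have : edist e x₀ ≤ ENNReal.ofReal n := by
                  rw [edist_dist]
                  exact ENNReal.ofReal_le_ofReal he.2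
                exact pow_le_pow_left' this 2
          _ = (ENNReal.ofReal n) ^ 2 * m E := by
              rw [setLIntegral_const]
      have hfin2 : (ENNReal.ofReal n) ^ 2 * m E ≠ ∞ :=
        ENNReal.mul_ne_top (ENNReal.pow_ne_top ENNReal.ofReal_ne_top) hEfin
      have : (m E)⁻¹ * ∫⁻ e in E, edist e x₀ ^ 2 ∂m ≠ ∞ :=
        ENNReal.mul_ne_top (ENNReal.inv_ne_top.2 hEne) (ne_top_of_le_ne_top hfin2 hb)
      exact this habs
    have hμ1mom : FiniteSecondMoment μ1 := by
      refine ⟨x₀, ?_⟩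
      rw [hμ1def]
      have hmeas : Measurable fun y : X => edist y x₀ ^ 2 :=
        ((continuous_id.edist continuous_const).measurable).pow_const 2
      rw [lintegral_add_measure, lintegral_smul_measure, lintegral_smul_measure,
        lintegral_dirac' _ hmeas, lintegral_dirac' _ hmeas]
      refine ENNReal.add_ne_top.2 ⟨?_, ?_⟩ <;>
        exact ENNReal.mul_ne_top (by norm_num)
          (ENNReal.pow_ne_top (edist_ne_top _ _))
    have hμ0ac : μ0 ≪ m := by
      intro s hs
      rw [hμ0def]
      simp only [Measure.smul_apply, smul_eq_mul]
      have : m.restrict E s = 0 :=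
        le_antisymm (le_trans (Measure.restrict_le_self s) hs.le) zero_le
      rw [this, mul_zero]
    -- apply H
    obtain ⟨T, hTmeas, hplT⟩ := H μ0 μ1 hμ0prob hμ1prob hμ0mom hμ1mom hμ0ac pl hplopt
    -- derive the contradiction
    have hd1 : (Measure.dirac x) ({x} : Set X) = 1 := by
      simp [Measure.dirac_apply' _ (measurableSet_singleton x)]
    have hd2 : (Measure.dirac (f x)) ({x} : Set X) = 0 := by
      rw [Measure.dirac_apply' _ (measurableSet_singleton x)]
      simp [Set.indicator_apply, hx]
    have hμ1x : μ1 ({x} : Set X) = 1/2 := by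
      rw [hμ1def]
      simp [hd1, hd2]
    have hSmeas : MeasurableSet (T ⁻¹' {x}) := hTmeas (measurableSet_singleton x)
    have hmapT : Measurable fun e : X => (e, T e) := measurable_id.prodMk hTmeas
    have hS : μ0 (T ⁻¹' {x}) = 1/2 := by
      have h1 : pl (Set.univ ×ˢ ({x} : Set X)) = 1/2 := by
        rw [hpldef, Measure.prod_prod, hμ0univ, hμ1x, one_mul]
      have h2 : pl (Set.univ ×ˢ ({x} : Set X)) = μ0 (T ⁻¹' {x}) := by
        rw [hplT, Measure.map_apply hmapT
          (MeasurableSet.univ.prod (measurableSet_singleton x))]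
        congr 1
        ext e
        simp [eq_comm]
      rw [← h2, h1]
    have hquarter : pl ((T ⁻¹' {x}) ×ˢ ({x} : Set X)) = 1/4 := by
      rw [hpldef, Measure.prod_prod, hS, hμ1x]
      simp only [one_div]
      rw [← ENNReal.mul_inv (by norm_num) (by norm_num)]
      norm_num
    have hhalf : pl ((T ⁻¹' {x}) ×ˢ ({x} : Set X)) = 1/2 := by
      rw [hplT, Measure.map_apply hmapT (hSmeas.prod (measurableSet_singleton x))]
      have : (fun e : X => (e, T e)) ⁻¹' ((T ⁻¹' {x}) ×ˢ ({x} : Set X))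
          = T ⁻¹' {x} := by
        ext e
        simp only [Set.mem_preimage, Set.mem_prod, Set.mem_singleton_iff]
        tauto
      rw [this, hS]
    rw [hquarter] at hhalf
    have hne : (1:ℝ≥0∞)/4 ≠ 1/2 := by norm_num
    exact hne hhalf
  -- now condition (a)
  have condA : ∀ G : Subgroup (X ≃ᵢ X), CondA m G := by
    intro G
    have hball : 0 < m (ball x₀ 1) :=
      hsupp _ isOpen_ball ⟨x₀, mem_ball_self one_pos⟩
    have hballfin : m (ball x₀ 1) ≠ ∞ := hfin _ isBounded_ball
    refine ⟨x₀, 1, m (ball x₀ 1) / 2, one_pos, ?_, ?_, ?_⟩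
    · exact ENNReal.half_pos hball.ne'
    · exact ENNReal.half_lt_self hball.ne' hballfin
    · intro g _ hg
      have h0 : m ({y | g y = y} ∩ ball x₀ 1) = 0 :=
        measure_mono_null Set.inter_subset_left (key g hg)
      rw [h0]
      exact ENNReal.half_pos hball.ne'
  exact ⟨key, condA ⊤, condA (isoMeasure m)⟩
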